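/- Fix n ≥ 2 and B ≥ 0. The following two statements are equivalent: (1) for every real n × 2 matrix A with orthonormal columns there exist indices i ≠ j such that the 2 × 2 submatrix of A formed by rows i and j has smallest singular value at least B; (2) for every family of vectors a₁, …, a_n ∈ ℝ² with ∑ a_i = 0 and ∑ ‖a_i‖ = 1 there exist indices i ≠ j such that ‖a_i‖ + ‖a_j‖ − ‖a_i + a_j‖ ≥ B². In particular, taking B = 1/√n, the Goreinov–Tyrtyshnikov–Zamarashkin hypothesis for k = 2 is equivalent to the statement that every unit-perimeter closed planar polygon has two sides a_i, a_j with ‖a_i‖ + ‖a_j‖ − ‖a_i + a_j‖ ≥ 1/n. -/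

import Mathlib

open Matrix

/-- Polarization-type identity for the quadratic form of a 2×2 matrix on the unit circle. -/
lemma quad_id (a b c d x y : ℝ) (hxy : x^2+y^2=1) :
    2*((a*x+b*y)^2+(c*x+d*y)^2) =
      (a^2+b^2+c^2+d^2) + (a^2+c^2-b^2-d^2)*(x^2-y^2) + (2*(a*b+c*d))*(2*x*y) := by
  linear_combination (a^2+b^2+c^2+d^2) * hxy

lemma amp_lower (E F A B : ℝ) (hAB : A^2+B^2 = 1) :
    -Real.sqrt (E^2+F^2) ≤ E*A + F*B := by
  have hS2 : Real.sqrt (E^2+F^2)^2 = E^2+F^2 := Real.sq_sqrt (by positivity)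
  have key : (E*A+F*B)^2 + (E*B-F*A)^2 = E^2+F^2 := by
    linear_combination (E^2+F^2)*hAB
  nlinarith [Real.sqrt_nonneg (E^2+F^2), sq_nonneg (E*B - F*A),
    sq_nonneg (E*A+F*B + Real.sqrt (E^2+F^2))]

/-- lower bound : the quadratic form is at least the smallest eigenvalue. -/
lemma quad_lower (a b c d x y : ℝ) (hxy : x^2+y^2 = 1) :
    ((a^2+b^2+c^2+d^2) - Real.sqrt ((a^2+c^2-b^2-d^2)^2 + (2*(a*b+c*d))^2))/2
      ≤ (a*x+b*y)^2+(c*x+d*y)^2 := by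
  have h2 := amp_lower (a^2+c^2-b^2-d^2) (2*(a*b+c*d)) (x^2-y^2) (2*x*y)
    (by linear_combination (x^2+y^2+1)*hxy)
  have h3 := quad_id a b c d x y hxy
  linarith

/-- the minimum of `E cos 2θ + F sin 2θ` is attained. -/
lemma min_point (E F S : ℝ) (hS2 : S^2 = E^2+F^2) (hS0 : 0 ≤ S) :
    ∃ x y : ℝ, x^2+y^2 = 1 ∧ E*(x^2-y^2) + F*(2*x*y) = -S := by
  by_cases hSE : S = E
  · exact ⟨0, 1, by norm_num, by rw [hSE]; ring⟩
  · have habs : |E| ≤ S := by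
      rw [← Real.sqrt_sq hS0, ← Real.sqrt_sq_eq_abs]
      exact Real.sqrt_le_sqrt (by nlinarith [sq_nonneg F])
    have hEleS : E < S := lt_of_le_of_ne ((le_abs_self E).trans habs) fun h => hSE h.symm
    have hSpos : 0 < S := by
      rcases hS0.lt_or_eq with h | h
      · exact h
      · exfalso
        have : |E| ≤ 0 := h ▸ habs
        have hE0 : E = 0 := abs_eq_zero.mp (le_antisymm this (abs_nonneg E))
        rw [hE0, ← h] at hEleS; exact lt_irrefl _ hEleS
    have hSEpos : 0 < S - E := by linarith
    have hS0' : S ≠ 0 := ne_of_gt hSpos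
    set x := Real.sqrt ((S-E)/(2*S)) with hx
    have hx2 : x^2 = (S-E)/(2*S) := Real.sq_sqrt (by positivity)
    have hxpos : 0 < x := Real.sqrt_pos.mpr (by positivity)
    have hx0 : x ≠ 0 := ne_of_gt hxpos
    have hF2 : F^2 = (S-E)*(S+E) := by nlinarith [hS2]
    have hx2' : 2*S*x^2 = S - E := by rw [hx2]; field_simp
    have h2xy : 2*S*(x*(-F/(2*S*x))) = -F := by field_simp
    have h6 : (S-E)*(2*S*(-F/(2*S*x))^2) = (S-E)*(S+E) := by
      linear_combination (-(2*S*(-F/(2*S*x))^2))*hx2' + (2*S*(x*(-F/(2*S*x))) - F)*h2xy + hF2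
    have hy2' : 2*S*(-F/(2*S*x))^2 = S+E := mul_left_cancel₀ (ne_of_gt hSEpos) h6
    refine ⟨x, -F/(2*S*x), ?_, ?_⟩
    · refine mul_left_cancel₀ (a := 2*S) (by positivity) ?_
      linear_combination hx2' + hy2'
    · refine mul_left_cancel₀ (a := S) hS0' ?_
      linear_combination (E/2)*hx2' - (E/2)*hy2' + F*h2xy + hS2

/-- existence of complex square roots, in real coordinates. -/
lemma exists_sqrt (s t : ℝ) : ∃ u v : ℝ, u^2 - v^2 = s ∧ 2*(u*v) = t := by
  obtain ⟨z, hz⟩ := IsAlgClosed.exists_pow_nat_eq (⟨s, t⟩ : ℂ) (n := 2) (by norm_num)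
  have h1 := congrArg Complex.re hz
  have h2 := congrArg Complex.im hz
  simp [pow_two, Complex.mul_re, Complex.mul_im] at h1 h2
  exact ⟨z.re, z.im, by nlinarith [h1], by nlinarith [h2]⟩

noncomputable def mk2 (s t : ℝ) : EuclideanSpace ℝ (Fin 2) :=
  (WithLp.equiv 2 (Fin 2 → ℝ)).symm ![s, t]

lemma mk2_apply0 (s t : ℝ) : mk2 s t 0 = s := rfl
lemma mk2_apply1 (s t : ℝ) : mk2 s t 1 = t := rfl

lemma norm_e2 (p : EuclideanSpace ℝ (Fin 2)) : ‖p‖ = Real.sqrt ((p 0)^2 + (p 1)^2) := by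
  rw [EuclideanSpace.norm_eq]; simp [Fin.sum_univ_two, sq_abs]

lemma sqrt_div_four (t : ℝ) (ht : 0 ≤ t) : Real.sqrt (t/4) = Real.sqrt t / 2 := by
  rw [show t/4 = t*(1/2)^2 by ring, Real.sqrt_mul ht, Real.sqrt_sq (by norm_num)]
  ring

/-- For `n ≥ 2` and `B ≥ 0`: every real `n × 2` matrix with orthonormal columns has a
`2 × 2` submatrix (formed by two distinct rows) with smallest singular value at least `B`
(expressed via `σ_min² = min over unit x of ‖Mx‖²`), if and only if every family of
vectors `a₁, …, aₙ ∈ ℝ²` forming a unit-perimeter closed polygon (`∑ aᵢ = 0`,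
`∑ ‖aᵢ‖ = 1`) contains two indices `i ≠ j` with `‖aᵢ‖ + ‖aⱼ‖ − ‖aᵢ + aⱼ‖ ≥ B²`. -/
theorem submatrix_bound_iff_polygon_bound (n : ℕ) (hn : 2 ≤ n) (B : ℝ) (hB : 0 ≤ B) :
    (∀ A : Matrix (Fin n) (Fin 2) ℝ, Aᵀ * A = 1 →
      ∃ i j : Fin n, i ≠ j ∧
        ∀ x : ℝ × ℝ, x.1 ^ 2 + x.2 ^ 2 = 1 →
          B ^ 2 ≤ (A i 0 * x.1 + A i 1 * x.2) ^ 2 + (A j 0 * x.1 + A j 1 * x.2) ^ 2) ↔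
    (∀ a : Fin n → EuclideanSpace ℝ (Fin 2), (∑ i, a i = 0) → (∑ i, ‖a i‖ = 1) →
      ∃ i j : Fin n, i ≠ j ∧ B ^ 2 ≤ ‖a i‖ + ‖a j‖ - ‖a i + a j‖) := by
  constructor
  · -- matrix statement → polygon statement
    intro hmat a hsum hper
    choose u v hu hv using fun i => exists_sqrt (2 * a i 0) (2 * a i 1)
    have hs0 : ∑ i, a i 0 = 0 := by
      have h := congrArg (fun p : EuclideanSpace ℝ (Fin 2) => p 0) hsum
      simp only [WithLp.ofLp_sum, Finset.sum_apply] at h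
      simpa using h
    have hs1 : ∑ i, a i 1 = 0 := by
      have h := congrArg (fun p : EuclideanSpace ℝ (Fin 2) => p 1) hsum
      simp only [WithLp.ofLp_sum, Finset.sum_apply] at h
      simpa using h
    have hnorm : ∀ i, u i^2 + v i^2 = 2*‖a i‖ := by
      intro i
      have hsq : (u i^2 + v i^2)^2 = (2*‖a i‖)^2 := by
        have h1 : (2*‖a i‖)^2 = 4*((a i 0)^2 + (a i 1)^2) := by
          rw [norm_e2, mul_pow, Real.sq_sqrt (by positivity)]; ring
        rw [h1]
        linear_combination (u i^2 - v i^2 + 2*(a i 0))*(hu i) + (2*(u i*v i) + 2*(a i 1))*(hv i)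
      have h2 : (0:ℝ) ≤ u i^2 + v i^2 := by positivity
      have h3 : (0:ℝ) ≤ 2*‖a i‖ := by positivity
      rw [← Real.sqrt_sq h2, hsq, Real.sqrt_sq h3]
    have huu : ∑ i, u i * u i = 1 := by
      rw [Finset.sum_congr rfl fun i _ =>
        show u i * u i = ‖a i‖ + a i 0 by linear_combination (hnorm i + hu i)/2]
      rw [Finset.sum_add_distrib, hper, hs0]; norm_num
    have hvv : ∑ i, v i * v i = 1 := by
      rw [Finset.sum_congr rfl fun i _ =>
        show v i * v i = ‖a i‖ - a i 0 by linear_combination (hnorm i - hu i)/2]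
      rw [Finset.sum_sub_distrib, hper, hs0]; norm_num
    have huv : ∑ i, u i * v i = 0 := by
      rw [Finset.sum_congr rfl fun i _ =>
        show u i * v i = a i 1 by linear_combination (hv i)/2]
      exact hs1
    have hM : (Matrix.of fun i => ![u i, v i])ᵀ * (Matrix.of fun i => ![u i, v i])
        = (1 : Matrix (Fin 2) (Fin 2) ℝ) := by
      ext k l
      fin_cases k <;> fin_cases l <;>
        simp [Matrix.mul_apply, Matrix.one_apply, mul_comm] <;>
        first
          | exact huu | exact hvv | exact huv
    obtain ⟨i, j, hij, hbound⟩ := hmat (Matrix.of fun i => ![u i, v i]) hM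
    refine ⟨i, j, hij, ?_⟩
    have hEeq : u i^2 + u j^2 - v i^2 - v j^2 = 2*(a i 0 + a j 0) := by
      linear_combination hu i + hu j
    have hFeq : 2*(u i*v i + u j*v j) = 2*(a i 1 + a j 1) := by
      linear_combination hv i + hv j
    have hnp : ‖a i + a j‖^2 = (a i 0 + a j 0)^2 + (a i 1 + a j 1)^2 := by
      rw [norm_e2, Real.sq_sqrt (by positivity)]; rfl
    have hS2 : (2*‖a i + a j‖)^2 = (u i^2 + u j^2 - v i^2 - v j^2)^2
        + (2*(u i*v i + u j*v j))^2 := by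
      rw [mul_pow, hnp]
      linear_combination (-((u i^2 + u j^2 - v i^2 - v j^2) + 2*(a i 0 + a j 0)))*hEeq
        + (-((2*(u i*v i + u j*v j)) + 2*(a i 1 + a j 1)))*hFeq
    obtain ⟨x, y, hxy, hmin⟩ := min_point (u i^2 + u j^2 - v i^2 - v j^2)
      (2*(u i*v i + u j*v j)) (2*‖a i + a j‖) hS2 (by positivity)
    have hb := hbound (x, y) hxy
    simp only [Matrix.of_apply, Matrix.cons_val', Matrix.cons_val_zero, Matrix.cons_val_one,
      Matrix.head_cons, Matrix.empty_val', Matrix.cons_val_fin_one, Matrix.head_fin_const] at hb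
    have hq := quad_id (u i) (v i) (u j) (v j) x y hxy
    linarith [hb, hq, hmin, hnorm i, hnorm j]
  · -- polygon statement → matrix statement
    intro hpoly A hA
    have h00 := congrFun (congrFun hA 0) 0
    have h01 := congrFun (congrFun hA 0) 1
    have h11 := congrFun (congrFun hA 1) 1
    simp [Matrix.mul_apply, Matrix.one_apply] at h00 h01 h11
    set a : Fin n → EuclideanSpace ℝ (Fin 2) :=
      fun i => mk2 ((A i 0^2 - A i 1^2)/2) (A i 0 * A i 1) with ha
    have hnorm : ∀ i, ‖a i‖ = (A i 0^2 + A i 1^2)/2 := by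
      intro i
      rw [norm_e2]
      have hc0 : a i 0 = (A i 0^2 - A i 1^2)/2 := rfl
      have hc1 : a i 1 = A i 0 * A i 1 := rfl
      rw [hc0, hc1, show ((A i 0^2 - A i 1^2)/2)^2 + (A i 0 * A i 1)^2
        = ((A i 0^2 + A i 1^2)/2)^2 by ring, Real.sqrt_sq (by positivity)]
    have hsum : ∑ i, a i = 0 := by
      ext k
      rw [WithLp.ofLp_sum, Finset.sum_apply]
      fin_cases k
      · show ∑ x : Fin n, a x 0 = (0:ℝ)
        have hcoord : ∀ i, a i 0 = A i 0 * A i 0/2 - A i 1 * A i 1/2 := fun i => by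
          rw [show a i 0 = (A i 0^2 - A i 1^2)/2 from rfl]; ring
        rw [Finset.sum_congr rfl fun i _ => hcoord i]
        rw [Finset.sum_sub_distrib, ← Finset.sum_div, ← Finset.sum_div, h00, h11]
        norm_num
      · show ∑ x : Fin n, a x 1 = (0:ℝ)
        have hcoord : ∀ i, a i 1 = A i 0 * A i 1 := fun i => rfl
        rw [Finset.sum_congr rfl fun i _ => hcoord i]
        exact h01
    have hper : ∑ i, ‖a i‖ = 1 := by
      rw [Finset.sum_congr rfl fun i _ => hnorm i]
      rw [Finset.sum_congr rfl fun i (_ : i ∈ Finset.univ) =>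
        show (A i 0^2 + A i 1^2)/2 = A i 0 * A i 0/2 + A i 1 * A i 1/2 by ring]
      rw [Finset.sum_add_distrib, ← Finset.sum_div, ← Finset.sum_div, h00, h11]
      norm_num
    obtain ⟨i, j, hij, hb⟩ := hpoly a hsum hper
    refine ⟨i, j, hij, ?_⟩
    intro x hx
    have hlow := quad_lower (A i 0) (A i 1) (A j 0) (A j 1) x.1 x.2 hx
    have hnij : ‖a i + a j‖ = Real.sqrt ((A i 0^2+A j 0^2-A i 1^2-A j 1^2)^2
        + (2*(A i 0*A i 1 + A j 0*A j 1))^2) / 2 := by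
      rw [norm_e2]
      have hc0 : (a i + a j) 0 = (A i 0^2 - A i 1^2)/2 + (A j 0^2 - A j 1^2)/2 := rfl
      have hc1 : (a i + a j) 1 = A i 0*A i 1 + A j 0*A j 1 := rfl
      rw [hc0, hc1, show ((A i 0^2 - A i 1^2)/2 + (A j 0^2 - A j 1^2)/2)^2
          + (A i 0*A i 1 + A j 0*A j 1)^2
        = ((A i 0^2+A j 0^2-A i 1^2-A j 1^2)^2 + (2*(A i 0*A i 1 + A j 0*A j 1))^2)/4 by ring]
      rw [sqrt_div_four _ (by positivity)]
    linarith [hb, hlow, hnorm i, hnorm j, hnij.le, hnij.ge]
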